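/- Let g ≥ 2 be an integer and take N = 2 in the definition of Θ. Then for every v ∈ I_2, the function Θ_v is identically zero on ℍ_g, i.e., Θ_v(Z) = 0 for all Z ∈ ℍ_g. -/

import Mathlib

open Complex Matrix

noncomputable section

/-- The Siegel upper half-space: symmetric complex `g × g` matrices with positive
definite imaginary part. -/
def SiegelUpper (g : ℕ) : Set (Matrix (Fin g) (Fin g) ℂ) :=
  {Z | Z.IsSymm ∧ (Matrix.of fun i j => (Z i j).im).PosDef}

/-- Index of the `i`-th coordinate among the first `g` coordinates of `Fin (2*g)`. -/
def idxU {g : ℕ} (i : Fin g) : Fin (2 * g) := ⟨i.1, by have := i.isLt; omega⟩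

/-- Index of the `i`-th coordinate among the last `g` coordinates of `Fin (2*g)`. -/
def idxL {g : ℕ} (i : Fin g) : Fin (2 * g) := ⟨g + i.1, by have := i.isLt; omega⟩

/-- The upper half `v_u` of a `2g`-vector. -/
def vecU {g : ℕ} (v : Fin (2 * g) → ℝ) : Fin g → ℝ := fun i => v (idxU i)

/-- The lower half `v_l` of a `2g`-vector. -/
def vecL {g : ℕ} (v : Fin (2 * g) → ℝ) : Fin g → ℝ := fun i => v (idxL i)

/-- The theta constant `θ_v(Z)`. -/
def thetaConst {g : ℕ} (v : Fin (2 * g) → ℝ) (Z : Matrix (Fin g) (Fin g) ℂ) : ℂ :=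
  ∑' n : Fin g → ℤ,
    Complex.exp (2 * Real.pi * Complex.I *
      ((1 / 2 : ℂ) * ∑ i, ∑ j, (((n i : ℝ) + vecU v i : ℝ) : ℂ) * Z i j *
          (((n j : ℝ) + vecU v j : ℝ) : ℂ)
        + ∑ i, (((n i : ℝ) + vecU v i : ℝ) : ℂ) * ((vecL v i : ℝ) : ℂ)))

/-- The set `S₋` of odd half-integer characteristics. -/
def Sminus (g : ℕ) : Set (Fin (2 * g) → ℝ) :=
  {a | (∀ k, a k = 0 ∨ a k = 1 / 2) ∧
    Complex.exp (4 * Real.pi * Complex.I * ((∑ i, vecU a i * vecL a i : ℝ) : ℂ)) = -1}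

/-- The set `S₊` of even half-integer characteristics. -/
def Splus (g : ℕ) : Set (Fin (2 * g) → ℝ) :=
  {a | ∀ k, a k = 0 ∨ a k = 1 / 2} \ Sminus g

/-- The real vector associated to a rational vector. -/
def ratToReal {g : ℕ} (v : Fin (2 * g) → ℚ) : Fin (2 * g) → ℝ := fun k => (v k : ℝ)

/-- The quotient of theta constants `Θ_v(Z)`. -/
def bigTheta (g N : ℕ) (v : Fin (2 * g) → ℚ) (Z : Matrix (Fin g) (Fin g) ℂ) : ℂ :=
  2 ^ (4 * N) *
    Complex.exp (-2 * Real.pi * Complex.I *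
      (((2 ^ g * N * (2 ^ g - 1) * (2 ^ g + 1) : ℝ) *
        ∑ i, vecU (ratToReal v) i * vecL (ratToReal v) i : ℝ) : ℂ)) *
    (∏ᶠ a ∈ Sminus g, thetaConst (a - ratToReal v) Z ^ (4 * N * (2 ^ g + 1))) /
    ∏ᶠ b ∈ Splus g, thetaConst b Z ^ (4 * N * (2 ^ g - 1))

/-- `v ∈ I_N` : `N` is the smallest positive integer with `N • v` integral. -/
def InIN (g N : ℕ) (v : Fin (2 * g) → ℚ) : Prop :=
  0 < N ∧ (∀ k, ∃ z : ℤ, (N : ℚ) * v k = z) ∧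
    ∀ m : ℕ, 0 < m → (∀ k, ∃ z : ℤ, (m : ℚ) * v k = z) → N ≤ m

/-- Congruence of rational vectors modulo `ℤ^{2g}`. -/
def CongMod (g : ℕ) (v w : Fin (2 * g) → ℚ) : Prop := ∀ k, ∃ z : ℤ, v k - w k = z

def liftZ : ZMod 2 → ℤ := fun x => if x = 1 then 1 else 0

lemma liftZ_cast (x : ZMod 2) : ((liftZ x : ℤ) : ZMod 2) = x := by revert x; decide
lemma liftZ_mem (x : ZMod 2) : liftZ x = 0 ∨ liftZ x = 1 := by revert x; decide

lemma odd_of_cast_eq_one (M : ℤ) (h : (M : ZMod 2) = 1) : Odd M := by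
  rcases Int.even_or_odd M with he | ho
  · exfalso
    obtain ⟨k, hk⟩ := he
    subst hk
    push_cast at h
    revert h
    generalize (k : ZMod 2) = x
    revert x; decide
  · exact ho

lemma exp_pi_I_odd (M : ℤ) (h : Odd M) : Complex.exp (Real.pi * Complex.I * M) = -1 := by
  have h1 : (Real.pi : ℂ) * Complex.I * M = M * (Real.pi * Complex.I) := by ring
  rw [h1, Complex.exp_int_mul, Complex.exp_pi_mul_I]
  exact h.neg_one_zpow

lemma sum_single_supp {M : Type*} [AddCommMonoid M] {g : ℕ} (F : Fin g → M) (i0 : Fin g)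
    (h : ∀ i, i ≠ i0 → F i = 0) : ∑ i, F i = F i0 :=
  Finset.sum_eq_single_of_mem i0 (Finset.mem_univ _) (fun b _ hb => h b hb)

lemma sum_pair_supp {M : Type*} [AddCommMonoid M] {g : ℕ} (F : Fin g → M) (i0 j : Fin g)
    (hij : i0 ≠ j) (h : ∀ i, i ≠ i0 → i ≠ j → F i = 0) : ∑ i, F i = F i0 + F j := by
  have h1 : (Finset.univ : Finset (Fin g)).sum F = ∑ i ∈ ({i0, j} : Finset (Fin g)), F i := by
    refine (Finset.sum_subset (Finset.subset_univ _) ?_).symm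
    intro x _ hx
    simp only [Finset.mem_insert, Finset.mem_singleton] at hx
    push_neg at hx
    exact h x hx.1 hx.2
  rw [h1, Finset.sum_pair hij]

-- ZMod 2 helper facts
lemma z2_ne_eq_add_one (x y : ZMod 2) (h : x ≠ y) : x = y + 1 := by revert x y; decide
lemma z2_eq_one_of_ne_zero (x : ZMod 2) (h : x ≠ 0) : x = 1 := by revert x; decide
lemma z2_h1 (x y : ZMod 2) (h : y + x = 1) : 1 * 1 + x * y = 1 := by revert x y; decide
lemma z2_h2 (x0 y0 x1 y1 : ZMod 2) (h0 : y0 + x0 = 1) (h1 : y1 + x1 = 1) :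
    (x0 * 1 + y0 * 1) + (x1 * x1 + y1 * y1) = 0 := by revert x0 y0 x1 y1; decide
lemma z2_h3 (x : ZMod 2) : 1 * 1 + 1 * 0 + (x * 1 + x * 1) = 1 := by revert x; decide
lemma z2_eq_zero_of_ne_one (x : ZMod 2) (h : x ≠ 1) : x = 0 := by revert x; decide
lemma z2_sub (x y : ZMod 2) : x - y = x + y := by revert x y; decide
lemma z2_h4 (s : ZMod 2) : 1 + s + s = 1 := by revert s; decide

lemma combC (g : ℕ) (hg : 2 ≤ g) (fu fl : Fin g → ZMod 2) :
    ∃ du dl : Fin g → ZMod 2,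
      (∑ i, du i * dl i) = 1 ∧
      (∑ i, (fl i * du i + fu i * dl i)) = ∑ i, fu i * fl i := by
  classical
  by_cases h1 : ∃ i, fu i + fl i = ∑ i, fu i * fl i
  · obtain ⟨i0, hi0⟩ := h1
    refine ⟨fun i => if i = i0 then 1 else 0, fun i => if i = i0 then 1 else 0, ?_, ?_⟩
    · rw [sum_single_supp _ i0 (fun i hi => by simp [hi])]
      simp
    · rw [sum_single_supp _ i0 (fun i hi => by simp [hi])]
      simp only [if_pos rfl, mul_one, ite_true, eq_self_iff_true]
      rw [← hi0]; ring
  · push_neg at h1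
    have hall : ∀ i, fu i + fl i = (∑ i, fu i * fl i) + 1 :=
      fun i => z2_ne_eq_add_one _ _ (h1 i)
    by_cases hc0 : (∑ i, fu i * fl i) = 0
    · set i0 : Fin g := ⟨0, by omega⟩ with hi0d
      set i1 : Fin g := ⟨1, by omega⟩ with hi1d
      have hne : i0 ≠ i1 := by
        simp only [hi0d, hi1d, ne_eq, Fin.mk.injEq]
        omega
      refine ⟨fun i => if i = i0 then 1 else if i = i1 then fl i1 else 0,
              fun i => if i = i0 then 1 else if i = i1 then fu i1 else 0, ?_, ?_⟩
      · rw [sum_pair_supp _ i0 i1 hne (fun i h h' => by simp [h, h'])]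
        simp only [if_pos rfl, if_neg hne.symm, if_pos rfl, ite_true]
        have hx := hall i1
        rw [hc0, zero_add] at hx
        simpa using z2_h1 _ _ hx
      · rw [sum_pair_supp _ i0 i1 hne (fun i h h' => by simp [h, h'])]
        have hx0 := hall i0
        have hx1 := hall i1
        rw [hc0, zero_add] at hx0 hx1
        rw [hc0]
        simpa [hne.symm] using z2_h2 _ _ _ _ hx0 hx1
    · have hc1 : (∑ i, fu i * fl i) = 1 := z2_eq_one_of_ne_zero _ hc0
      have hfl : ∀ i, fl i = fu i := by
        intro i
        have hx := hall i
        rw [hc1] at hx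
        have : fu i + fl i = 0 := by rw [hx]; decide
        revert this
        generalize fu i = x; generalize fl i = y
        revert x y; decide
      have hex : ∃ i0, fu i0 = 1 := by
        by_contra hno
        push_neg at hno
        have : (∑ i, fu i * fl i) = 0 := by
          apply Finset.sum_eq_zero
          intro i _
          rw [z2_eq_zero_of_ne_one _ (hno i), zero_mul]
        exact hc0 this
      obtain ⟨i0, hfu0⟩ := hex
      have hj : ∃ j : Fin g, i0 ≠ j := by
        by_cases h : i0 = ⟨0, by omega⟩
        · exact ⟨⟨1, by omega⟩, by rw [h]; simp only [ne_eq, Fin.mk.injEq]; omega⟩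
        · exact ⟨⟨0, by omega⟩, h⟩
      obtain ⟨j, hji⟩ := hj
      refine ⟨fun i => if i = i0 then 1 else if i = j then 1 else 0,
              fun i => if i = i0 then 0 else if i = j then 1 else 0, ?_, ?_⟩
      · rw [sum_pair_supp _ i0 j hji (fun i h h' => by simp [h, h'])]
        simp [hji, hji.symm]
      · rw [sum_pair_supp _ i0 j hji (fun i h h' => by simp [h, h'])]
        simp only [if_pos rfl, if_neg hji.symm, if_neg hji, ite_true]
        rw [hc1, hfl i0, hfu0, hfl j]
        simpa using z2_h3 (fu j)

lemma theta_vanish {g : ℕ} (c : Fin (2 * g) → ℝ) (Z : Matrix (Fin g) (Fin g) ℂ)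
    (p q : Fin g → ℤ)
    (hu : ∀ i, vecU c i = (p i : ℝ) / 2)
    (hl : ∀ i, vecL c i = (q i : ℝ) / 2)
    (hM : Odd (∑ i, p i * q i)) :
    thetaConst c Z = 0 := by
  classical
  set F : (Fin g → ℤ) → ℂ := fun n =>
    Complex.exp (2 * Real.pi * Complex.I *
      ((1 / 2 : ℂ) * ∑ i, ∑ j, (((n i : ℝ) + vecU c i : ℝ) : ℂ) * Z i j *
          (((n j : ℝ) + vecU c j : ℝ) : ℂ)
        + ∑ i, (((n i : ℝ) + vecU c i : ℝ) : ℂ) * ((vecL c i : ℝ) : ℂ))) with hF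
  have hinv : Function.Involutive (fun n : Fin g → ℤ => fun i => -n i - p i) := by
    intro n; funext i; simp only; ring
  set e : Equiv.Perm (Fin g → ℤ) := hinv.toPerm _ with he
  have key : ∀ n : Fin g → ℤ, F (e n) = -F n := by
    intro n
    set K : ℤ := -(2 * ∑ i, n i * q i + ∑ i, p i * q i) with hKdef
    have hKodd : Odd K := ((even_two_mul _).add_odd hM).neg
    have h0 : ∀ i, (e n) i = -n i - p i := fun i => rfl
    have hstep : F (e n) = Complex.exp (2 * Real.pi * Complex.I *
        ((1 / 2 : ℂ) * ∑ i, ∑ j, (((n i : ℝ) + vecU c i : ℝ) : ℂ) * Z i j *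
            (((n j : ℝ) + vecU c j : ℝ) : ℂ)
          + ∑ i, (((n i : ℝ) + vecU c i : ℝ) : ℂ) * ((vecL c i : ℝ) : ℂ))
        + Real.pi * Complex.I * K) := by
      rw [hF]
      simp only
      congr 1
      have hQeq : (∑ i, ∑ j, ((((e n) i : ℝ) + vecU c i : ℝ) : ℂ) * Z i j *
            ((((e n) j : ℝ) + vecU c j : ℝ) : ℂ))
          = ∑ i, ∑ j, (((n i : ℝ) + vecU c i : ℝ) : ℂ) * Z i j *
            (((n j : ℝ) + vecU c j : ℝ) : ℂ) := by
        refine Finset.sum_congr rfl fun i _ => Finset.sum_congr rfl fun j _ => ?_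
        rw [h0 i, h0 j, hu i, hu j]
        push_cast
        ring
      have hLeq : (∑ i, ((((e n) i : ℝ) + vecU c i : ℝ) : ℂ) * ((vecL c i : ℝ) : ℂ))
          = -∑ i, ((n i : ℂ) + (p i : ℂ) / 2) * ((q i : ℂ) / 2) := by
        rw [← Finset.sum_neg_distrib]
        refine Finset.sum_congr rfl fun i _ => ?_
        rw [h0 i, hu i, hl i]
        push_cast
        ring
      have hLeq2 : (∑ i, (((n i : ℝ) + vecU c i : ℝ) : ℂ) * ((vecL c i : ℝ) : ℂ))
          = ∑ i, ((n i : ℂ) + (p i : ℂ) / 2) * ((q i : ℂ) / 2) := by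
        refine Finset.sum_congr rfl fun i _ => ?_
        rw [hu i, hl i]
        push_cast
        ring
      have hKc : (K : ℂ) = -(2 * ∑ i, (n i : ℂ) * (q i : ℂ) + ∑ i, (p i : ℂ) * (q i : ℂ)) := by
        rw [hKdef]; push_cast; ring
      rw [hQeq, hLeq, hLeq2, hKc]
      have h4 : (4 : ℂ) * ∑ i, ((n i : ℂ) + (p i : ℂ) / 2) * ((q i : ℂ) / 2)
          = 2 * ∑ i, (n i : ℂ) * (q i : ℂ) + ∑ i, (p i : ℂ) * (q i : ℂ) := by
        rw [Finset.mul_sum, Finset.mul_sum, ← Finset.sum_add_distrib]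
        refine Finset.sum_congr rfl fun i _ => ?_
        ring
      linear_combination (-(Real.pi : ℂ) * Complex.I) * h4
    rw [hstep, Complex.exp_add, exp_pi_I_odd K hKodd, hF]
    ring
  have h1 : thetaConst c Z = ∑' n, F n := rfl
  have h2 : ∑' n, F (e n) = ∑' n, F n := e.tsum_eq F
  have h3 : ∑' n, F (e n) = -∑' n, F n := by
    rw [tsum_congr key, tsum_neg]
  have h4 : thetaConst c Z = -thetaConst c Z := by
    calc thetaConst c Z = ∑' n, F (e n) := h1.trans h2.symm
      _ = -∑' n, F n := h3
      _ = -thetaConst c Z := by rw [h1]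
  have h5 : (2 : ℂ) * thetaConst c Z = 0 := by linear_combination h4
  have := mul_eq_zero.mp h5
  simpa using this

theorem statement14 (g : ℕ) (hg : 2 ≤ g) (v : Fin (2 * g) → ℚ) (hv : InIN g 2 v) :
    ∀ Z ∈ SiegelUpper g, bigTheta g 2 v Z = 0 := by
  classical
  intro Z _
  obtain ⟨-, hint, -⟩ := hv
  choose z hz using hint
  have hvz : ∀ k, (v k : ℝ) = (z k : ℝ) / 2 := by
    intro k
    have h := hz k
    have h2 : (2 : ℝ) * (v k : ℝ) = (z k : ℝ) := by exact_mod_cast h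
    linarith
  set fu : Fin g → ZMod 2 := fun i => ((z (idxU i) : ZMod 2)) with hfu
  set fl : Fin g → ZMod 2 := fun i => ((z (idxL i) : ZMod 2)) with hfl
  obtain ⟨du, dl, hQ, hB⟩ := combC g hg fu fl
  set a : Fin (2 * g) → ℝ := fun k =>
    if h : (k : ℕ) < g then (liftZ (du ⟨k, h⟩) : ℝ) / 2
    else (liftZ (dl ⟨(k : ℕ) - g, by have := k.isLt; omega⟩) : ℝ) / 2 with ha
  have haU : ∀ i : Fin g, a (idxU i) = (liftZ (du i) : ℝ) / 2 := by
    intro i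
    have h : ((idxU i : Fin (2 * g)) : ℕ) < g := i.isLt
    rw [ha]
    simp only
    rw [dif_pos h]
    have he : (⟨((idxU i : Fin (2 * g)) : ℕ), h⟩ : Fin g) = i := Fin.ext rfl
    rw [he]
  have haL : ∀ i : Fin g, a (idxL i) = (liftZ (dl i) : ℝ) / 2 := by
    intro i
    have h : ¬ ((idxL i : Fin (2 * g)) : ℕ) < g := by
      have : ((idxL i : Fin (2 * g)) : ℕ) = g + i.1 := rfl
      omega
    rw [ha]
    simp only
    rw [dif_neg h]
    congr 2
    exact congrArg liftZ (congrArg dl (Fin.ext (show g + i.1 - g = i.1 by omega)))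
  -- a is an odd characteristic
  have hmem : a ∈ Sminus g := by
    constructor
    · intro k
      rw [ha]
      simp only
      split <;> rcases liftZ_mem _ with h | h <;> rw [h] <;> norm_num
    · have hsum : (∑ i, vecU a i * vecL a i : ℝ)
          = ((∑ i, liftZ (du i) * liftZ (dl i) : ℤ) : ℝ) / 4 := by
        push_cast
        rw [Finset.sum_div]
        refine Finset.sum_congr rfl fun i _ => ?_
        show a (idxU i) * a (idxL i) = _
        rw [haU i, haL i]
        ring
      have hModd : Odd (∑ i, liftZ (du i) * liftZ (dl i)) := by
        apply odd_of_cast_eq_one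
        push_cast [liftZ_cast]
        exact hQ
      rw [hsum]
      rw [show ((4 : ℂ) * Real.pi * Complex.I *
          ((((∑ i, liftZ (du i) * liftZ (dl i) : ℤ) : ℝ) / 4 : ℝ) : ℂ))
          = Real.pi * Complex.I * ((∑ i, liftZ (du i) * liftZ (dl i) : ℤ) : ℂ) by
        push_cast; ring]
      exact exp_pi_I_odd _ hModd
  -- the theta factor vanishes
  set p : Fin g → ℤ := fun i => liftZ (du i) - z (idxU i) with hp
  set q : Fin g → ℤ := fun i => liftZ (dl i) - z (idxL i) with hq
  have hu : ∀ i, vecU (a - ratToReal v) i = (p i : ℝ) / 2 := by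
    intro i
    show (a - ratToReal v) (idxU i) = _
    rw [Pi.sub_apply, haU i]
    show _ - (v (idxU i) : ℝ) = _
    rw [hvz, hp]
    push_cast
    ring
  have hl : ∀ i, vecL (a - ratToReal v) i = (q i : ℝ) / 2 := by
    intro i
    show (a - ratToReal v) (idxL i) = _
    rw [Pi.sub_apply, haL i]
    show _ - (v (idxL i) : ℝ) = _
    rw [hvz, hq]
    push_cast
    ring
  have hModd2 : Odd (∑ i, p i * q i) := by
    apply odd_of_cast_eq_one
    push_cast
    have step : ∀ i : Fin g, ((p i : ZMod 2)) * ((q i : ZMod 2))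
        = du i * dl i + (fl i * du i + fu i * dl i) + fu i * fl i := by
      intro i
      have h1 : (p i : ZMod 2) = du i + fu i := by
        rw [hp]
        push_cast [liftZ_cast]
        rw [z2_sub]
      have h2 : (q i : ZMod 2) = dl i + fl i := by
        rw [hq]
        push_cast [liftZ_cast]
        rw [z2_sub]
      rw [h1, h2]
      ring
    rw [Finset.sum_congr rfl (fun i _ => step i), Finset.sum_add_distrib,
      Finset.sum_add_distrib, hQ, hB]
    exact z2_h4 _
  have hzero : thetaConst (a - ratToReal v) Z = 0 :=
    theta_vanish (a - ratToReal v) Z p q hu hl hModd2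
  -- Sminus is finite
  have hfin : (Sminus g).Finite := by
    apply Set.Finite.subset
      (Set.Finite.pi (t := fun _ : Fin (2 * g) => ({0, 1 / 2} : Set ℝ))
        (fun _ => (Set.finite_singleton _).insert _))
    intro x hx
    rw [Set.mem_pi]
    intro k _
    rcases hx.1 k with h | h <;> simp [h]
  have hprodzero : (∏ᶠ a' ∈ Sminus g,
      thetaConst (a' - ratToReal v) Z ^ (4 * 2 * (2 ^ g + 1))) = 0 := by
    rw [finprod_mem_eq_finite_toFinset_prod _ hfin]
    apply Finset.prod_eq_zero (hfin.mem_toFinset.mpr hmem)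
    rw [hzero]
    exact zero_pow (by positivity)
  unfold bigTheta
  rw [hprodzero, mul_zero, zero_div]
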